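/- Let d₁, h₁, d₂, h₂ ∈ ℝ⟦X⟧ with h₁ having constant coefficient 0. Then for all n, k ∈ ℕ: Σ_{j=0}^{n} (coeff n (d₁·h₁^j))·(coeff j (d₂·h₂^k)) = coeff n (d₁·(d₂∘h₁)·(h₂∘h₁)^k). -/

import Mathlib

open PowerSeries

/-- Substitution (composition) of formal power series: `psComp g f = g ∘ f`,
the substitution of `f` into `g`.  When `f` has zero constant coefficient, the
`n`-th coefficient of `g ∘ f` is `∑_{k=0}^{n} g_k · [zⁿ] fᵏ`. -/
noncomputable def psComp (g f : PowerSeries ℝ) : PowerSeries ℝ :=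
  PowerSeries.mk fun n => ∑ k ∈ Finset.range (n + 1),
    PowerSeries.coeff k g * PowerSeries.coeff n (f ^ k)

namespace Stmt14Aux

variable {n : ℕ} {h₁ : PowerSeries ℝ}

lemma coeff_pow_eq_zero (hh₁ : constantCoeff h₁ = 0) {m j : ℕ} (h : m < j) :
    coeff m (h₁ ^ j) = 0 :=
  X_pow_dvd_iff.mp (pow_dvd_pow_of_dvd (X_dvd_iff.mpr hh₁) j) m h

lemma modeq_coeff {a b : PowerSeries ℝ} (h : (X : PowerSeries ℝ) ^ (n + 1) ∣ a - b)
    {m : ℕ} (hm : m ≤ n) : coeff m a = coeff m b := by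
  have := X_pow_dvd_iff.mp h m (Nat.lt_succ_of_le hm)
  rwa [map_sub, sub_eq_zero] at this

lemma modeq_mul {a a' b b' : PowerSeries ℝ}
    (ha : (X : PowerSeries ℝ) ^ (n + 1) ∣ a - a')
    (hb : (X : PowerSeries ℝ) ^ (n + 1) ∣ b - b') :
    (X : PowerSeries ℝ) ^ (n + 1) ∣ a * b - a' * b' := by
  have : a * b - a' * b' = a * (b - b') + (a - a') * b' := by ring
  rw [this]
  exact dvd_add (hb.mul_left a) (ha.mul_right b')

lemma modeq_pow {a a' : PowerSeries ℝ}
    (ha : (X : PowerSeries ℝ) ^ (n + 1) ∣ a - a') (k : ℕ) :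
    (X : PowerSeries ℝ) ^ (n + 1) ∣ a ^ k - a' ^ k := by
  induction k with
  | zero => simp
  | succ k ih =>
      rw [pow_succ, pow_succ]
      exact modeq_mul ih ha

lemma psComp_modeq (hh₁ : constantCoeff h₁ = 0) (g : PowerSeries ℝ) :
    (X : PowerSeries ℝ) ^ (n + 1) ∣
      psComp g h₁ - ∑ j ∈ Finset.range (n + 1), C (coeff j g) * h₁ ^ j := by
  rw [X_pow_dvd_iff]
  intro m hm
  rw [map_sub, sub_eq_zero]
  rw [psComp, coeff_mk, map_sum]
  simp only [coeff_C_mul]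
  apply Finset.sum_subset
  · exact Finset.range_subset_range.mpr hm
  · intro x _ hx
    have hlt : m < x := by
      simpa [Finset.mem_range, Nat.lt_succ_iff] using hx
    rw [coeff_pow_eq_zero hh₁ hlt, mul_zero]

lemma poly_modeq (hh₁ : constantCoeff h₁ = 0) (p : Polynomial ℝ)
    (hp : ∀ j ≤ n, p.coeff j = 0) :
    (X : PowerSeries ℝ) ^ (n + 1) ∣ Polynomial.eval₂ C h₁ p := by
  rw [Polynomial.eval₂_eq_sum_range]
  apply Finset.dvd_sum
  intro j _
  by_cases h : j ≤ n
  · rw [hp j h]; simp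
  · push_neg at h
    exact ((pow_dvd_pow (X : PowerSeries ℝ) h).trans
      (pow_dvd_pow_of_dvd (X_dvd_iff.mpr hh₁) j)).mul_left _

lemma trunc_modeq (f : PowerSeries ℝ) :
    (X : PowerSeries ℝ) ^ (n + 1) ∣ ((trunc (n + 1) f : Polynomial ℝ) : PowerSeries ℝ) - f := by
  rw [X_pow_dvd_iff]
  intro m hm
  rw [map_sub, sub_eq_zero, Polynomial.coeff_coe, coeff_trunc, if_pos hm]

end Stmt14Aux

open Stmt14Aux in
theorem stmt14 (d₁ h₁ d₂ h₂ : PowerSeries ℝ) (hh₁ : constantCoeff h₁ = 0)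
    (n k : ℕ) :
    ∑ j ∈ Finset.range (n + 1),
        coeff n (d₁ * h₁ ^ j) * coeff j (d₂ * h₂ ^ k)
      = coeff n (d₁ * psComp d₂ h₁ * (psComp h₂ h₁) ^ k) := by
  set G := d₂ * h₂ ^ k with hG
  set Wd : Polynomial ℝ := trunc (n + 1) d₂ with hWd
  set Wh : Polynomial ℝ := trunc (n + 1) h₂ with hWh
  set WG : Polynomial ℝ := trunc (n + 1) G with hWG
  -- E p := eval₂ C h₁ p
  -- step 1
  have h1 : (X : PowerSeries ℝ) ^ (n + 1) ∣
      psComp d₂ h₁ - Polynomial.eval₂ C h₁ Wd := by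
    rw [hWd, eval₂_trunc_eq_sum_range]
    exact psComp_modeq hh₁ d₂
  have h2 : (X : PowerSeries ℝ) ^ (n + 1) ∣
      psComp h₂ h₁ - Polynomial.eval₂ C h₁ Wh := by
    rw [hWh, eval₂_trunc_eq_sum_range]
    exact psComp_modeq hh₁ h₂
  -- step 2
  have h3 : (X : PowerSeries ℝ) ^ (n + 1) ∣
      d₁ * psComp d₂ h₁ * (psComp h₂ h₁) ^ k
        - d₁ * Polynomial.eval₂ C h₁ Wd * (Polynomial.eval₂ C h₁ Wh) ^ k :=
    modeq_mul (modeq_mul (by simp) h1) (modeq_pow h2 k)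
  -- step 3
  have h4 : d₁ * Polynomial.eval₂ C h₁ Wd * (Polynomial.eval₂ C h₁ Wh) ^ k
      = d₁ * Polynomial.eval₂ C h₁ (Wd * Wh ^ k) := by
    rw [Polynomial.eval₂_mul, Polynomial.eval₂_pow, mul_assoc]
  -- step 4 : low coefficients of Wd*Wh^k agree with those of G
  have hlow : ∀ j ≤ n, (Wd * Wh ^ k - WG).coeff j = 0 := by
    intro j hj
    have hd : (X : PowerSeries ℝ) ^ (n + 1) ∣
        ((Wd : PowerSeries ℝ) * (Wh : PowerSeries ℝ) ^ k) - G :=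
      modeq_mul (trunc_modeq d₂) (modeq_pow (trunc_modeq h₂) k)
    have e1 : (Wd * Wh ^ k : Polynomial ℝ).coeff j
        = coeff j ((Wd : PowerSeries ℝ) * (Wh : PowerSeries ℝ) ^ k) := by
      rw [← Polynomial.coeff_coe, Polynomial.coe_mul, Polynomial.coe_pow]
    have e2 : (WG).coeff j = coeff j G := by
      rw [hWG, coeff_trunc, if_pos (Nat.lt_succ_of_le hj)]
    rw [Polynomial.coeff_sub, e1, e2, modeq_coeff hd hj, sub_self]
  have h5 : (X : PowerSeries ℝ) ^ (n + 1) ∣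
      Polynomial.eval₂ C h₁ (Wd * Wh ^ k) - Polynomial.eval₂ C h₁ WG := by
    rw [← Polynomial.eval₂_sub]
    exact poly_modeq hh₁ _ hlow
  -- assemble : total congruence
  have htot : (X : PowerSeries ℝ) ^ (n + 1) ∣
      d₁ * psComp d₂ h₁ * (psComp h₂ h₁) ^ k - d₁ * Polynomial.eval₂ C h₁ WG := by
    have := modeq_mul (a := d₁) (a' := d₁) (by simp)
      (h5 : _)
    have step : (X : PowerSeries ℝ) ^ (n + 1) ∣
        d₁ * Polynomial.eval₂ C h₁ (Wd * Wh ^ k) - d₁ * Polynomial.eval₂ C h₁ WG :=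
      this
    calc (X : PowerSeries ℝ) ^ (n + 1) ∣
        (d₁ * psComp d₂ h₁ * (psComp h₂ h₁) ^ k
          - d₁ * Polynomial.eval₂ C h₁ (Wd * Wh ^ k))
        + (d₁ * Polynomial.eval₂ C h₁ (Wd * Wh ^ k)
          - d₁ * Polynomial.eval₂ C h₁ WG) := dvd_add (h4 ▸ h3) step
      _ = _ := by ring
  -- step 5 : compute coeff n of d₁ * E WG
  rw [show coeff n (d₁ * psComp d₂ h₁ * (psComp h₂ h₁) ^ k)
      = coeff n (d₁ * Polynomial.eval₂ C h₁ WG) from modeq_coeff htot le_rfl]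
  rw [hWG, eval₂_trunc_eq_sum_range, Finset.mul_sum, map_sum]
  apply Finset.sum_congr rfl
  intro j _
  rw [show d₁ * (C (coeff j G) * h₁ ^ j) = C (coeff j G) * (d₁ * h₁ ^ j) by ring,
    coeff_C_mul, mul_comm]
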